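/- Let n ≥ 1. The set of matrices M ∈ M_n(ℝ) with det M > 0 is exactly the set of finite products e^{M_1} ⋯ e^{M_m} of exponentials of real n×n matrices (with m ≥ 1). -/

import Mathlib

open NormedSpace Matrix

namespace Stmt11Aux

variable {n : ℕ}

lemma exp_of_sq_zero {A : Matrix (Fin n) (Fin n) ℝ} (h : A ^ 2 = 0) :
    exp A = 1 + A := by
  letI : SeminormedRing (Matrix (Fin n) (Fin n) ℝ) := Matrix.linftyOpSemiNormedRing
  letI : NormedRing (Matrix (Fin n) (Fin n) ℝ) := Matrix.linftyOpNormedRing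
  letI : NormedAlgebra ℝ (Matrix (Fin n) (Fin n) ℝ) := Matrix.linftyOpNormedAlgebra
  rw [NormedSpace.exp_eq_tsum (𝕂 := ℝ)]
  show (∑' k : ℕ, (k.factorial : ℝ)⁻¹ • A ^ k) = 1 + A
  rw [tsum_eq_sum (s := {0, 1}) ?_]
  · simp
  · intro k hk
    have hk2 : 2 ≤ k := by
      simp only [Finset.mem_insert, Finset.mem_singleton] at hk
      omega
    obtain ⟨m, rfl⟩ := Nat.exists_eq_add_of_le hk2
    rw [pow_add, h, zero_mul, smul_zero]

lemma exp_transvection {i j : Fin n} (hij : i ≠ j) (c : ℝ) :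
    exp (Matrix.single i j c) = Matrix.transvection i j c := by
  rw [exp_of_sq_zero, Matrix.transvection]
  rw [sq, Matrix.single_mul_single_of_ne (h := hij.symm)]

lemma det_exp_pos (A : Matrix (Fin n) (Fin n) ℝ) : 0 < (exp A).det := by
  have hc : Commute ((2⁻¹ : ℝ) • A) ((2⁻¹ : ℝ) • A) := Commute.refl _
  have h2 : exp A = exp ((2⁻¹ : ℝ) • A) * exp ((2⁻¹ : ℝ) • A) := by
    rw [← Matrix.exp_add_of_commute _ _ hc]
    congr 1
    rw [← add_smul]
    norm_num
  have hu : IsUnit (exp ((2⁻¹ : ℝ) • A)).det :=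
    (Matrix.isUnit_iff_isUnit_det _).mp (Matrix.isUnit_exp _)
  rw [h2, Matrix.det_mul]
  rcases hu.ne_zero.lt_or_gt with h | h
  · exact mul_pos_of_neg_of_neg h h
  · exact mul_pos h h

lemma key {R : Type*} [Ring R] (A B P Q : R)
    (hAA : A*A=0) (hAB : A*B=P) (hBA : B*A=Q)
    (hAP : A*P=0) (hAQ : A*Q=A) (hPA : P*A=A) (hQA : Q*A=0)
    (hBB : B*B=0) (hBP : B*P=B) (hBQ : B*Q=0) (hPB : P*B=0) (hQB : Q*B=B)
    (hPP : P*P=P) (hQQ : Q*Q=Q) (hPQ : P*Q=0) (hQP : Q*P=0) :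
    ((1+A)*(1-B)*(1+A))*((1+A)*(1-B)*(1+A)) = 1 - P - P - Q - Q := by
  have e1 : (1+A)*(1-B)*(1+A) = 1 + A - B - P - Q := by
    simp only [mul_add, add_mul, sub_mul, mul_sub, one_mul, mul_one,
      hAA, hAB, hBA, hPA]
    abel
  rw [e1]
  simp only [mul_add, add_mul, sub_mul, mul_sub, one_mul, mul_one,
    hAA, hBB, hAB, hBA, hAP, hAQ, hPA, hQA, hBP, hBQ, hPB, hQB, hPP, hQQ, hPQ, hQP]
  abel

/-- `M` is a (possibly empty) product of matrix exponentials. -/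
def Good (M : Matrix (Fin n) (Fin n) ℝ) : Prop :=
  ∃ l : List (Matrix (Fin n) (Fin n) ℝ), M = (l.map (NormedSpace.exp)).prod

lemma good_one : Good (1 : Matrix (Fin n) (Fin n) ℝ) := ⟨[], by simp⟩

lemma good_exp (A : Matrix (Fin n) (Fin n) ℝ) : Good (exp A) := ⟨[A], by simp⟩

lemma good_mul {M N : Matrix (Fin n) (Fin n) ℝ} (hM : Good M) (hN : Good N) :
    Good (M * N) := by
  obtain ⟨l₁, rfl⟩ := hM
  obtain ⟨l₂, rfl⟩ := hN
  exact ⟨l₁ ++ l₂, by simp⟩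

lemma good_transvection {i j : Fin n} (hij : i ≠ j) (c : ℝ) :
    Good (Matrix.transvection i j c) :=
  exp_transvection hij c ▸ good_exp _

lemma good_list_transvec (L : List (Matrix.TransvectionStruct (Fin n) ℝ)) :
    Good (L.map Matrix.TransvectionStruct.toMatrix).prod := by
  induction L with
  | nil => simpa using good_one
  | cons t L ih =>
      rw [List.map_cons, List.prod_cons]
      refine good_mul ?_ ih
      obtain ⟨i, j, hij, c⟩ := t
      rw [Matrix.TransvectionStruct.toMatrix_mk]
      exact good_transvection hij c

lemma std_diag (k : Fin n) :
    Matrix.single k k (1:ℝ) = Matrix.diagonal (Pi.single k 1) := by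
  ext a b
  simp only [Matrix.single, Matrix.of_apply, Matrix.diagonal_apply, Pi.single_apply]
  split_ifs <;> simp_all
  omega

lemma flip_eq {i j : Fin n} (hij : i ≠ j) :
    (1 : Matrix (Fin n) (Fin n) ℝ) - Matrix.single i i 1 - Matrix.single i i 1
        - Matrix.single j j 1 - Matrix.single j j 1 =
      Matrix.diagonal (fun k => if k = i ∨ k = j then (-1 : ℝ) else 1) := by
  set u : Fin n → ℝ := Pi.single i 1 with hu
  set v : Fin n → ℝ := Pi.single j 1 with hv
  have hfun : (fun k => if k = i ∨ k = j then (-1 : ℝ) else 1) =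
      (fun k => (1 : ℝ) - u k - u k - v k - v k) := by
    funext k
    simp only [hu, hv, Pi.single_apply]
    split_ifs <;> simp_all
  rw [hfun]
  show Matrix.diagonal _ - _ - _ - _ - _ = Matrix.diagonal _
  rw [std_diag i, std_diag j]
  ext a b
  by_cases hab : a = b
  · subst hab; simp [Matrix.diagonal_apply_eq, hu, hv]
  · simp [Matrix.diagonal_apply_ne _ hab, Matrix.one_apply_ne hab]

lemma neg_std {i j : Fin n} :
    Matrix.single i j (-1 : ℝ) = -Matrix.single i j 1 := by
  ext a b
  simp [Matrix.single]
  split_ifs <;> simp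

lemma good_flip {i j : Fin n} (hij : i ≠ j) :
    Good (Matrix.diagonal (fun k => if k = i ∨ k = j then (-1 : ℝ) else 1)) := by
  have hmain := key (R := Matrix (Fin n) (Fin n) ℝ)
    (Matrix.single i j 1) (Matrix.single j i 1)
    (Matrix.single i i 1) (Matrix.single j j 1)
    (by simp [hij, hij.symm]) (by simp [hij, hij.symm]) (by simp [hij, hij.symm])
    (by simp [hij, hij.symm]) (by simp [hij, hij.symm]) (by simp [hij, hij.symm])
    (by simp [hij, hij.symm]) (by simp [hij, hij.symm]) (by simp [hij, hij.symm])
    (by simp [hij, hij.symm]) (by simp [hij, hij.symm]) (by simp [hij, hij.symm])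
    (by simp [hij, hij.symm]) (by simp [hij, hij.symm]) (by simp [hij, hij.symm])
    (by simp [hij, hij.symm])
  have h1A : (1 + Matrix.single i j (1:ℝ)) = Matrix.transvection i j 1 := rfl
  have h1B : (1 - Matrix.single j i (1:ℝ)) = Matrix.transvection j i (-1) := by
    rw [Matrix.transvection, neg_std]
    abel
  rw [← flip_eq hij, ← hmain, h1A, h1B]
  have ht1 : Good (Matrix.transvection i j 1) := good_transvection hij 1
  have ht2 : Good (Matrix.transvection j i (-1)) := good_transvection hij.symm (-1)
  exact good_mul (good_mul (good_mul ht1 ht2) ht1) (good_mul (good_mul ht1 ht2) ht1)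

lemma good_pos_diagonal {d : Fin n → ℝ} (hd : ∀ i, 0 < d i) :
    Good (Matrix.diagonal d) := by
  have hfun : (fun i => NormedSpace.exp (Real.log (d i))) = d := by
    funext i
    rw [← Real.exp_eq_exp_ℝ]
    exact Real.exp_log (hd i)
  have : exp (Matrix.diagonal (fun i => Real.log (d i))) = Matrix.diagonal d := by
    rw [Matrix.exp_diagonal, Pi.exp_def, hfun]
  rw [← this]
  exact good_exp _

lemma good_sign_diagonal :
    ∀ N : ℕ, ∀ s : Fin n → ℝ, (∀ i, s i = 1 ∨ s i = -1) → Even N →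
      (Finset.univ.filter (fun i => s i = -1)).card = N → Good (Matrix.diagonal s) := by
  intro N
  induction N using Nat.strong_induction_on with
  | _ N ih =>
    intro s hs hev hcard
    rcases Nat.eq_zero_or_pos N with hN0 | hNpos
    · subst hN0
      have hempty : (Finset.univ.filter (fun i => s i = -1)) = ∅ :=
        Finset.card_eq_zero.mp hcard
      have hone : s = fun _ => 1 := by
        funext i
        rcases hs i with h | h
        · exact h
        · exfalso
          have : i ∈ Finset.univ.filter (fun i => s i = -1) := by
            simp [h]
          rw [hempty] at this
          exact absurd this (Finset.notMem_empty i)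
      rw [hone]
      simpa [Matrix.diagonal_one] using (good_one (n := n))
    · have hN2 : 2 ≤ N := by
        rcases hev with ⟨k, hk⟩
        omega
      have h1lt : 1 < (Finset.univ.filter (fun i => s i = -1)).card := by omega
      obtain ⟨i, hi, j, hj, hij⟩ := Finset.one_lt_card.mp h1lt
      have hsi : s i = -1 := (Finset.mem_filter.mp hi).2
      have hsj : s j = -1 := (Finset.mem_filter.mp hj).2
      set s' : Fin n → ℝ := fun k => if k = i ∨ k = j then 1 else s k with hs'
      have hs'mem : ∀ k, s' k = 1 ∨ s' k = -1 := by
        intro k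
        by_cases h : k = i ∨ k = j
        · left; simp [hs', h]
        · simpa [hs', h] using hs k
      have hsub : {i, j} ⊆ Finset.univ.filter (fun i => s i = -1) := by
        intro k hk
        rcases Finset.mem_insert.mp hk with rfl | hk
        · exact hi
        · rw [Finset.mem_singleton.mp hk]; exact hj
      have hfilter : (Finset.univ.filter (fun k => s' k = -1)) =
          (Finset.univ.filter (fun k => s k = -1)) \ {i, j} := by
        ext k
        by_cases h : k = i ∨ k = j
        · simp only [Finset.mem_filter, Finset.mem_univ, true_and, Finset.mem_sdiff,
            Finset.mem_insert, Finset.mem_singleton, hs']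
          simp [h]
          norm_num
        · simp only [Finset.mem_filter, Finset.mem_univ, true_and, Finset.mem_sdiff,
            Finset.mem_insert, Finset.mem_singleton, hs']
          push_neg at h
          simp [h.1, h.2]
      have hcard' : (Finset.univ.filter (fun k => s' k = -1)).card = N - 2 := by
        rw [hfilter, Finset.card_sdiff_of_subset hsub, hcard]
        congr 1
        rw [Finset.card_insert_of_notMem (by simpa using hij), Finset.card_singleton]
      have hev' : Even (N - 2) := by
        rcases hev with ⟨k, hk⟩
        exact ⟨k - 1, by omega⟩
      have hgood' : Good (Matrix.diagonal s') :=
        ih (N - 2) (by omega) s' hs'mem hev' hcard'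
      have hfun : (fun k => s' k * (if k = i ∨ k = j then (-1:ℝ) else 1)) = s := by
        funext k
        by_cases h : k = i ∨ k = j
        · simp only [hs', if_pos h]
          rcases h with rfl | rfl
          · rw [hsi]; norm_num
          · rw [hsj]; norm_num
        · simp [hs', h]
      have hdecomp : Matrix.diagonal s' *
          Matrix.diagonal (fun k => if k = i ∨ k = j then (-1:ℝ) else 1) = Matrix.diagonal s := by
        rw [Matrix.diagonal_mul_diagonal, hfun]
      rw [← hdecomp]
      exact good_mul hgood' (good_flip hij)

lemma good_diagonal {D : Fin n → ℝ} (hD : 0 < ∏ i, D i) :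
    Good (Matrix.diagonal D) := by
  have hne : ∀ i, D i ≠ 0 := by
    intro i h
    rw [Finset.prod_eq_zero (Finset.mem_univ i) h] at hD
    exact lt_irrefl 0 hD
  set s : Fin n → ℝ := fun i => if D i < 0 then -1 else 1 with hsdef
  have habs : ∀ i, D i = |D i| * s i := by
    intro i
    by_cases h : D i < 0
    · simp [hsdef, h, abs_of_neg h]
    · simp [hsdef, h, abs_of_nonneg (not_lt.mp h)]
  have hfun : (fun i => |D i| * s i) = D := funext fun i => (habs i).symm
  have hdecomp : Matrix.diagonal (fun i => |D i|) * Matrix.diagonal s = Matrix.diagonal D := by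
    rw [Matrix.diagonal_mul_diagonal, hfun]
  have habspos : ∀ i, 0 < |D i| := fun i => abs_pos.mpr (hne i)
  have hsprod : 0 < ∏ i, s i := by
    have h1 : (∏ i, D i) = (∏ i, |D i|) * ∏ i, s i := by
      rw [← Finset.prod_mul_distrib]
      exact Finset.prod_congr rfl fun i _ => habs i
    have h2 : 0 < ∏ i, |D i| := Finset.prod_pos fun i _ => habspos i
    nlinarith [hD, h1, h2]
  have hsmem : ∀ i, s i = 1 ∨ s i = -1 := by
    intro i
    by_cases h : D i < 0
    · right; simp [hsdef, h]
    · left; simp [hsdef, h]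
  have hev : Even (Finset.univ.filter (fun i => s i = -1)).card := by
    by_contra hodd
    rw [Nat.not_even_iff_odd] at hodd
    have hprodeq : (∏ i, s i) =
        (-1 : ℝ) ^ (Finset.univ.filter (fun i => s i = -1)).card := by
      rw [← Finset.prod_filter_mul_prod_filter_not Finset.univ (fun i => s i = -1) s]
      have ha : (∏ i ∈ Finset.univ.filter (fun i => s i = -1), s i) =
          (-1 : ℝ) ^ (Finset.univ.filter (fun i => s i = -1)).card := by
        rw [Finset.prod_congr rfl (fun i hi => (Finset.mem_filter.mp hi).2),
          Finset.prod_const]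
      have hb : (∏ i ∈ Finset.univ.filter (fun i => ¬ s i = -1), s i) = 1 := by
        apply Finset.prod_eq_one
        intro i hi
        rcases hsmem i with h | h
        · exact h
        · exact absurd h (Finset.mem_filter.mp hi).2
      rw [ha, hb, mul_one]
    rw [hprodeq, hodd.neg_one_pow] at hsprod
    norm_num at hsprod
  rw [← hdecomp]
  exact good_mul (good_pos_diagonal habspos) (good_sign_diagonal _ s hsmem hev rfl)

end Stmt11Aux

open Stmt11Aux in
/-- For `n ≥ 1`, the set of real `n × n` matrices with positive determinant is exactly
the set of finite products `e^{M₁} ⋯ e^{Mₘ}` (`m ≥ 1`) of real matrix exponentials. -/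
theorem stmt11 {n : ℕ} (hn : 1 ≤ n) :
    {M : Matrix (Fin n) (Fin n) ℝ | 0 < M.det} =
      {M : Matrix (Fin n) (Fin n) ℝ |
        ∃ l : List (Matrix (Fin n) (Fin n) ℝ), l ≠ [] ∧
          M = (l.map (NormedSpace.exp)).prod} := by
  ext M
  simp only [Set.mem_setOf_eq]
  constructor
  · intro hM
    obtain ⟨L, L', D, hLDL⟩ :=
      Matrix.Pivot.exists_list_transvec_mul_diagonal_mul_list_transvec M
    have hdetD : 0 < ∏ i, D i := by
      rw [hLDL, Matrix.det_mul, Matrix.det_mul, Matrix.TransvectionStruct.det_toMatrix_prod,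
        Matrix.TransvectionStruct.det_toMatrix_prod, one_mul, mul_one,
        Matrix.det_diagonal] at hM
      exact hM
    have hgood : Good M := by
      rw [hLDL]
      exact good_mul (good_mul (good_list_transvec L) (good_diagonal hdetD))
        (good_list_transvec L')
    obtain ⟨l, hl⟩ := hgood
    refine ⟨(0 : Matrix (Fin n) (Fin n) ℝ) :: l, List.cons_ne_nil _ _, ?_⟩
    rw [List.map_cons, List.prod_cons, NormedSpace.exp_zero, one_mul]
    exact hl
  · rintro ⟨l, -, rfl⟩
    have : ((l.map (NormedSpace.exp)).prod).det = ((l.map (NormedSpace.exp)).map Matrix.det).prod := by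
      induction l with
      | nil => simp
      | cons a l ih => simp [Matrix.det_mul, ih]
    rw [this]
    apply List.prod_pos
    intro a ha
    simp only [List.map_map, List.mem_map] at ha
    obtain ⟨A, -, rfl⟩ := ha
    exact det_exp_pos A
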